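/- Let xs < xt be integers, C ≥ 0 a real number, and f : ℤ → ℝ a function satisfying the Ameso(C) condition on [xs,xt]. Suppose there exist x0 ∈ [xs,xt] and a positive integer b with xs ≤ x0 − b such that (a) f(x0) = min over y ∈ [x0−b, x0] of f(y), and (b) f(x0) + C ≤ max over y ∈ [x0−b, x0] of f(y). Then f(x0) = min over y ∈ [xs, x0] of f(y). -/
import Mathlib


/-- Ceiling of `(x+y)/2` as a rational. -/
def mceil (x y : ℤ) : ℤ := ⌈((x : ℚ) + (y : ℚ)) / 2⌉

/-- Floor of `(x+y)/2` as a rational. -/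
def mfloor (x y : ℤ) : ℤ := ⌊((x : ℚ) + (y : ℚ)) / 2⌋

lemma mceil_eq_of (x y p : ℤ) (h : x + y = 2 * p) : mceil x y = p := by
  unfold mceil
  have h2 : ((x : ℚ) + y) / 2 = (p : ℚ) := by
    have := congrArg (Int.cast : ℤ → ℚ) h
    push_cast at this
    linarith
  rw [h2, Int.ceil_intCast]

lemma mfloor_eq_of (x y p : ℤ) (h : x + y = 2 * p) : mfloor x y = p := by
  unfold mfloor
  have h2 : ((x : ℚ) + y) / 2 = (p : ℚ) := by
    have := congrArg (Int.cast : ℤ → ℚ) h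
    push_cast at this
    linarith
  rw [h2, Int.floor_intCast]

/-- Lemma 5 (narrowing to the left): if `f(x0)` is the minimum of `f` on `[x0-b, x0]`
and `f(x0) + C ≤ max_{[x0-b, x0]} f`, then `f(x0)` is the minimum of `f` on `[xs, x0]`. -/
theorem ameso_narrow_left
    (xs xt : ℤ) (hxst : xs < xt) (C : ℝ) (hC : 0 ≤ C) (f : ℤ → ℝ)
    (hAmeso : ∀ x ∈ Finset.Icc xs xt, ∀ y ∈ Finset.Icc xs xt,
      f x + f y + C ≥ f (mceil x y) + f (mfloor x y))
    (x0 : ℤ) (hx0l : xs ≤ x0) (hx0r : x0 ≤ xt)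
    (b : ℤ) (hb : 0 < b) (hbs : xs ≤ x0 - b)
    (hmin : f x0 = (Finset.Icc (x0 - b) x0).inf' (Finset.nonempty_Icc.2 (by omega)) f)
    (hmax : f x0 + C ≤ (Finset.Icc (x0 - b) x0).sup' (Finset.nonempty_Icc.2 (by omega)) f) :
    f x0 = (Finset.Icc xs x0).inf' (Finset.nonempty_Icc.2 (by omega)) f := by
  have hx0mem : x0 ∈ Finset.Icc xs x0 := Finset.mem_Icc.2 ⟨hx0l, le_refl _⟩
  refine le_antisymm (Finset.le_inf' _ f ?_) (Finset.inf'_le f hx0mem)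
  intro z hz
  by_contra hlt
  push_neg at hlt
  obtain ⟨hzl, hzr⟩ := Finset.mem_Icc.1 hz
  -- z must be strictly left of x0 - b
  have hzb : z < x0 - b := by
    by_contra h
    push_neg at h
    have : f x0 ≤ f z := by
      rw [hmin]; exact Finset.inf'_le f (Finset.mem_Icc.2 ⟨h, hzr⟩)
    linarith
  -- witness of the max on [x0-b, x0]
  obtain ⟨w, hwmem, hw⟩ :=
    Finset.exists_mem_eq_sup' (Finset.nonempty_Icc.2 (show x0 - b ≤ x0 by omega)) f
  have hwle : f x0 + C ≤ f w := by rw [← hw]; exact hmax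
  obtain ⟨hwl, hwr⟩ := Finset.mem_Icc.1 hwmem
  -- work on S = [z, x0]
  set S : Finset ℤ := Finset.Icc z x0 with hS
  have hSne : S.Nonempty := Finset.nonempty_Icc.2 (by omega)
  set M : ℝ := S.sup' hSne f with hM
  have hwS : w ∈ S := Finset.mem_Icc.2 ⟨by omega, hwr⟩
  have hMw : f w ≤ M := Finset.le_sup' f hwS
  have hMC : f x0 + C ≤ M := le_trans hwle hMw
  -- smallest maximizer p
  obtain ⟨p0, hp0S, hp0⟩ := Finset.exists_mem_eq_sup' hSne f
  set T : Finset ℤ := S.filter (fun y => f y = M) with hT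
  have hTne : T.Nonempty := ⟨p0, Finset.mem_filter.2 ⟨hp0S, hp0.symm⟩⟩
  set p : ℤ := T.min' hTne with hp
  have hpT : p ∈ T := Finset.min'_mem _ _
  have hpS : p ∈ S := (Finset.mem_filter.1 hpT).1
  have hfp : f p = M := (Finset.mem_filter.1 hpT).2
  obtain ⟨hpl, hpr⟩ := Finset.mem_Icc.1 hpS
  have hpmin : ∀ q ∈ S, f q = M → p ≤ q := fun q hq hfq =>
    Finset.min'_le _ _ (Finset.mem_filter.2 ⟨hq, hfq⟩)
  by_cases hcase : 2 * p - x0 < z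
  · -- Case A: reflect around p toward z: pair (z, 2p - z)
    have hy : 2 * p - z ∈ Finset.Icc xs xt := Finset.mem_Icc.2 ⟨by omega, by omega⟩
    have hzmem : z ∈ Finset.Icc xs xt := Finset.mem_Icc.2 ⟨hzl, by omega⟩
    have hA := hAmeso z hzmem (2 * p - z) hy
    rw [mceil_eq_of z (2 * p - z) p (by ring), mfloor_eq_of z (2 * p - z) p (by ring)] at hA
    have hyS : 2 * p - z ∈ S := Finset.mem_Icc.2 ⟨by omega, by omega⟩
    have hyM : f (2 * p - z) ≤ M := Finset.le_sup' f hyS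
    -- f z + f(2p-z) + C ≥ 2M, f(2p-z) ≤ M ⇒ f z ≥ M - C ≥ f x0
    rw [hfp] at hA
    linarith
  · push_neg at hcase
    by_cases hpx : p = x0
    · -- then M = f x0 ≥ f x0 + C, so C = 0 and x0 - 1 is a smaller maximizer
      have hC0 : C = 0 := by
        have : f x0 = M := by rw [← hpx]; exact hfp
        linarith
      have h1S : x0 - 1 ∈ S := Finset.mem_Icc.2 ⟨by omega, by omega⟩
      have h1le : f (x0 - 1) ≤ M := Finset.le_sup' f h1S
      have h1ge : f x0 ≤ f (x0 - 1) := by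
        rw [hmin]; exact Finset.inf'_le f (Finset.mem_Icc.2 ⟨by omega, by omega⟩)
      have hfx0M : f x0 = M := by rw [← hpx]; exact hfp
      have h1M : f (x0 - 1) = M := le_antisymm h1le (by linarith)
      have := hpmin (x0 - 1) h1S h1M
      omega
    · -- p < x0 : pair (2p - x0, x0), get a maximizer 2p - x0 < p
      have hplt : p < x0 := lt_of_le_of_ne hpr hpx
      have hq : 2 * p - x0 ∈ Finset.Icc xs xt := Finset.mem_Icc.2 ⟨by omega, by omega⟩
      have hx0' : x0 ∈ Finset.Icc xs xt := Finset.mem_Icc.2 ⟨hx0l, hx0r⟩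
      have hA := hAmeso (2 * p - x0) hq x0 hx0'
      rw [mceil_eq_of (2 * p - x0) x0 p (by ring),
          mfloor_eq_of (2 * p - x0) x0 p (by ring)] at hA
      rw [hfp] at hA
      have hqS : 2 * p - x0 ∈ S := Finset.mem_Icc.2 ⟨by omega, by omega⟩
      have hqle : f (2 * p - x0) ≤ M := Finset.le_sup' f hqS
      have hqM : f (2 * p - x0) = M := le_antisymm hqle (by linarith)
      have := hpmin (2 * p - x0) hqS hqM
      omega
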